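/- Among all rooted trees with a given outdegree sequence S (the multiset of numbers of children of all vertices), the greedy caterpillar G(S) has the maximum ancestral spectral radius: for every rooted tree T with outdegree sequence S, ρ_C(T) ≤ ρ_C(G(S)). -/

import Mathlib

open Matrix

/-- A rooted tree on a finite vertex type `V`, encoded by its root and the
parent function: the root is its own parent, and iterating the parent function
from any vertex eventually reaches the root.  (These conditions force the graph
whose edges join each non-root vertex to its parent to be a tree.) -/
structure TreeOn (V : Type) [Fintype V] [DecidableEq V] where
  root : V
  parent : V → V
  parent_root : parent root = root
  reaches : ∀ v, ∃ k, parent^[k] v = root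

namespace TreeOn

variable {V : Type} [Fintype V] [DecidableEq V]

/-- `u` is a (weak) ancestor of `v`: some iterate of the parent function sends
`v` to `u`.  (Any ancestor is reached within `Fintype.card V` steps, so the
bound makes the predicate decidable without changing its meaning.) -/
def IsAncestor (T : TreeOn V) (u v : V) : Prop :=
  ∃ k, k ≤ Fintype.card V ∧ T.parent^[k] v = u

instance (T : TreeOn V) (u v : V) : Decidable (T.IsAncestor u v) := by
  have h : T.IsAncestor u v ↔ ∃ k ∈ Finset.range (Fintype.card V + 1), T.parent^[k] v = u := by
    simp [IsAncestor, Nat.lt_succ_iff]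
  rw [h]; infer_instance

/-- The level of a vertex: its distance to the root. -/
def level (T : TreeOn V) (v : V) : ℕ := Nat.find (T.reaches v)

/-- The ancestral level `ℓ(v ∨ w)`: the level of the lowest common ancestor
of `v` and `w`, i.e. the greatest level of a common ancestor. -/
def lcaLevel (T : TreeOn V) (v w : V) : ℕ :=
  (Finset.univ.filter fun u => T.IsAncestor u v ∧ T.IsAncestor u w).sup T.level

/-- A leaf is a vertex with no children. -/
def IsLeaf (T : TreeOn V) (v : V) : Prop := ∀ u, T.parent u = v → u = v

instance (T : TreeOn V) : DecidablePred T.IsLeaf := fun v =>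
  inferInstanceAs (Decidable (∀ u, T.parent u = v → u = v))

/-- The type of leaves of `T`. -/
abbrev Leaf (T : TreeOn V) := {v : V // T.IsLeaf v}

/-- The ancestral matrix `C(T)`, indexed by the leaves of `T`, whose
`(v, w)` entry is the ancestral level `ℓ(v ∨ w)`. -/
noncomputable def ancMatrix (T : TreeOn V) : Matrix T.Leaf T.Leaf ℝ :=
  Matrix.of fun v w => (T.lcaLevel v.1 w.1 : ℝ)

/-- The ancestral spectral radius `ρ_C(T)`: the largest eigenvalue of `C(T)`. -/
noncomputable def rhoC (T : TreeOn V) : ℝ :=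
  sSup {μ : ℝ | ∃ x : T.Leaf → ℝ, x ≠ 0 ∧ T.ancMatrix.mulVec x = μ • x}

/-- The underlying simple graph of the tree: each non-root vertex is joined
to its parent. -/
def graph (T : TreeOn V) : SimpleGraph V :=
  SimpleGraph.fromRel fun u v => T.parent u = v ∧ u ≠ v

/-- The number of children (outdegree) of a vertex. -/
def childCount (T : TreeOn V) (v : V) : ℕ :=
  (Finset.univ.filter fun u => T.parent u = v ∧ u ≠ v).card

end TreeOn

namespace TreeOn

variable {V : Type} [Fintype V] [DecidableEq V]

/-- A rooted caterpillar: removing all leaves yields a path with the root at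
one end; equivalently, the internal (non-leaf) vertices are pairwise
comparable with respect to the ancestor relation. -/
def IsCaterpillar (T : TreeOn V) : Prop :=
  ∀ v w : V, ¬ T.IsLeaf v → ¬ T.IsLeaf w → T.IsAncestor v w ∨ T.IsAncestor w v

/-- A greedy caterpillar: a rooted caterpillar whose outdegrees are assigned
in ascending order along the backbone, starting from the root. -/
def IsGreedyCaterpillar (T : TreeOn V) : Prop :=
  T.IsCaterpillar ∧
    ∀ v w : V, ¬ T.IsLeaf v → ¬ T.IsLeaf w → T.IsAncestor v w →
      T.childCount v ≤ T.childCount w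

/-- The outdegree sequence of a rooted tree: the multiset of the numbers of
children of all vertices. -/
def outdegSeq (T : TreeOn V) : Multiset ℕ :=
  Finset.univ.val.map T.childCount

end TreeOn



namespace TreeOn
open Finset
variable {V : Type} [Fintype V] [DecidableEq V] (T : TreeOn V)


lemma iterate_root (k : ℕ) : T.parent^[k] T.root = T.root := by
  induction k with
  | zero => rfl
  | succ n ih => rw [Function.iterate_succ_apply', ih, T.parent_root]

lemma isAncestor_iff {u v : V} : T.IsAncestor u v ↔ ∃ k, T.parent^[k] v = u := by
  constructor
  · rintro ⟨k, _, h⟩; exact ⟨k, h⟩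
  · rintro ⟨k, h⟩
    have hex : ∃ k, T.parent^[k] v = u := ⟨k, h⟩
    set k0 := Nat.find hex with hk0
    have h0 : T.parent^[k0] v = u := Nat.find_spec hex
    refine ⟨k0, ?_, h0⟩
    by_contra hlt
    push_neg at hlt
    have key : ∀ i j : Fin (k0 + 1), i.1 < j.1 → T.parent^[i.1] v ≠ T.parent^[j.1] v := by
      intro i j hij heq
      have hj : j.1 ≤ k0 := Nat.lt_succ_iff.mp j.2
      have h1 : T.parent^[k0 - j.1 + i.1] v = u := by
        have h2 : T.parent^[k0 - j.1 + j.1] v = u := by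
          rw [Nat.sub_add_cancel hj]; exact h0
        rw [Function.iterate_add_apply] at h2 ⊢
        rw [← heq] at h2; exact h2
      exact Nat.find_min hex (by omega) h1
    have hinj : Function.Injective (fun i : Fin (k0 + 1) => T.parent^[i.1] v) := by
      intro i j hij
      by_contra hne
      rcases Nat.lt_or_ge i.1 j.1 with h | h
      · exact key i j h hij
      · rcases Nat.lt_or_ge j.1 i.1 with h' | h'
        · exact key j i h' hij.symm
        · exact hne (Fin.ext (le_antisymm h' h))
    have := Fintype.card_le_of_injective _ hinj
    simp [Fintype.card_fin] at this
    omega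

lemma anc_refl (v : V) : T.IsAncestor v v := (T.isAncestor_iff).mpr ⟨0, rfl⟩

lemma anc_trans {u z v : V} (h1 : T.IsAncestor u z) (h2 : T.IsAncestor z v) :
    T.IsAncestor u v := by
  rw [T.isAncestor_iff] at *
  obtain ⟨a, ha⟩ := h1; obtain ⟨b, hb⟩ := h2
  exact ⟨a + b, by rw [Function.iterate_add_apply, hb, ha]⟩

lemma level_spec (v : V) : T.parent^[T.level v] v = T.root := Nat.find_spec (T.reaches v)

lemma level_eq_zero {v : V} : T.level v = 0 ↔ v = T.root := by
  simp [level, Nat.find_eq_zero]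

lemma root_anc (v : V) : T.IsAncestor T.root v :=
  (T.isAncestor_iff).mpr ⟨T.level v, T.level_spec v⟩

lemma anc_root_iff {u : V} : T.IsAncestor u T.root ↔ u = T.root := by
  rw [T.isAncestor_iff]
  constructor
  · rintro ⟨k, hk⟩; rw [T.iterate_root] at hk; exact hk.symm
  · rintro rfl; exact ⟨0, rfl⟩

lemma level_parent {v : V} (h : v ≠ T.root) : T.level (T.parent v) + 1 = T.level v := by
  have h1 : T.level v ≠ 0 := fun h0 => h (T.level_eq_zero.mp h0)
  have h2 : T.parent^[T.level v - 1] (T.parent v) = T.root := by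
    rw [← Function.iterate_succ_apply]
    have h3 : (T.level v - 1).succ = T.level v := by omega
    rw [h3]
    exact T.level_spec v
  have hle : T.level (T.parent v) ≤ T.level v - 1 := Nat.find_le h2
  have hge : T.level v ≤ T.level (T.parent v) + 1 := by
    apply Nat.find_le
    rw [Function.iterate_succ_apply]
    exact T.level_spec (T.parent v)
  omega

lemma level_iterate {v : V} {k : ℕ} (hk : k ≤ T.level v) :
    T.level (T.parent^[k] v) + k = T.level v := by
  induction k with
  | zero => simp
  | succ n ih =>
    have hn : n ≤ T.level v := by omega
    have ihn := ih hn
    have hne : T.parent^[n] v ≠ T.root := by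
      intro he
      have := T.level_eq_zero.mpr he
      omega
    rw [Function.iterate_succ_apply']
    have := T.level_parent hne
    omega

lemma iterate_past {v : V} {k : ℕ} (hk : T.level v ≤ k) : T.parent^[k] v = T.root := by
  have : k = (k - T.level v) + T.level v := by omega
  rw [this, Function.iterate_add_apply, T.level_spec, T.iterate_root]

lemma anc_level_le {u v : V} (h : T.IsAncestor u v) : T.level u ≤ T.level v := by
  rw [T.isAncestor_iff] at h
  obtain ⟨k, hk⟩ := h
  rcases le_or_gt k (T.level v) with h' | h'
  · have := T.level_iterate h'; rw [hk] at this; omega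
  · have := T.iterate_past (v := v) (k := k) (by omega)
    rw [hk] at this; subst this; simp [T.level_eq_zero.mpr rfl]

lemma anc_eq_of_level_eq {u v : V} (h : T.IsAncestor u v) (hl : T.level u = T.level v) :
    u = v := by
  rw [T.isAncestor_iff] at h
  obtain ⟨k, hk⟩ := h
  rcases le_or_gt k (T.level v) with h' | h'
  · have := T.level_iterate h'; rw [hk] at this
    have : k = 0 := by omega
    subst this; exact hk.symm
  · have := T.iterate_past (v := v) (k := k) (by omega)
    rw [hk] at this; subst this
    have : T.level v = 0 := by rw [← hl]; exact T.level_eq_zero.mpr rfl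
    exact (T.level_eq_zero.mp this).symm

lemma anc_antisymm {u v : V} (h1 : T.IsAncestor u v) (h2 : T.IsAncestor v u) : u = v :=
  T.anc_eq_of_level_eq h1 (le_antisymm (T.anc_level_le h1) (T.anc_level_le h2))

lemma anc_total_of_anc {u u' v : V} (h1 : T.IsAncestor u v) (h2 : T.IsAncestor u' v) :
    T.IsAncestor u u' ∨ T.IsAncestor u' u := by
  rw [T.isAncestor_iff] at h1 h2
  obtain ⟨a, ha⟩ := h1; obtain ⟨a', ha'⟩ := h2
  rcases le_or_gt a a' with h | h
  · right
    rw [T.isAncestor_iff]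
    refine ⟨a' - a, ?_⟩
    rw [← ha, ← Function.iterate_add_apply]
    rw [show a' - a + a = a' from by omega, ha']
  · left
    rw [T.isAncestor_iff]
    refine ⟨a - a', ?_⟩
    rw [← ha', ← Function.iterate_add_apply]
    rw [show a - a' + a' = a from by omega, ha]

lemma anc_of_level_le {u u' v : V} (h1 : T.IsAncestor u v) (h2 : T.IsAncestor u' v)
    (hl : T.level u ≤ T.level u') : T.IsAncestor u u' := by
  rcases T.anc_total_of_anc h1 h2 with h | h
  · exact h
  · have : u' = u := T.anc_eq_of_level_eq h (le_antisymm (T.anc_level_le h) hl)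
    subst this; exact T.anc_refl _



-- §2
lemma parent_anc (c : V) : T.IsAncestor (T.parent c) c :=
  T.isAncestor_iff.mpr ⟨1, rfl⟩

lemma parent_eq_self_iff {v : V} : T.parent v = v ↔ v = T.root := by
  constructor
  · intro h
    obtain ⟨k, hk⟩ := T.reaches v
    rw [Function.iterate_fixed h] at hk; exact hk
  · rintro rfl; exact T.parent_root

lemma childCount_eq_zero_iff {v : V} : T.childCount v = 0 ↔ T.IsLeaf v := by
  rw [childCount, Finset.card_eq_zero, Finset.filter_eq_empty_iff]
  constructor
  · intro h u hu
    by_contra hne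
    exact h (Finset.mem_univ u) ⟨hu, hne⟩
  · rintro h u - ⟨h1, h2⟩
    exact h2 (h u h1)

lemma anc_parent_of_ne {u v : V} (hne : u ≠ v) (h : T.IsAncestor u v) :
    T.IsAncestor u (T.parent v) := by
  rw [T.isAncestor_iff] at h ⊢
  obtain ⟨k, hk⟩ := h
  match k, hk with
  | 0, hk => exact absurd hk.symm hne
  | k + 1, hk => exact ⟨k, by rw [← Function.iterate_succ_apply]; exact hk⟩

lemma leaf_anc_eq {u l : V} (hu : T.IsLeaf u) (h : T.IsAncestor u l) : u = l := by
  have hex : ∃ k, T.parent^[k] l = u := T.isAncestor_iff.mp h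
  set k0 := Nat.find hex with hk0
  have h0 : T.parent^[k0] l = u := Nat.find_spec hex
  match hk : k0, h0 with
  | 0, h0 => exact h0.symm
  | k + 1, h0 =>
    exfalso
    have hc : T.parent (T.parent^[k] l) = u := by
      have h5 := Function.iterate_succ_apply' T.parent k l
      rw [h5] at h0; exact h0
    have := hu _ hc
    exact Nat.find_min hex (by omega) this

/-- subtree of u -/
def subt (u : V) : Finset V := Finset.univ.filter (T.IsAncestor u ·)

lemma mem_subt {u v : V} : v ∈ T.subt u ↔ T.IsAncestor u v := by simp [subt]

lemma self_mem_subt (u : V) : u ∈ T.subt u := T.mem_subt.mpr (T.anc_refl u)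

lemma exists_leaf_anc (u : V) : ∃ l, T.IsLeaf l ∧ T.IsAncestor u l := by
  obtain ⟨w, hw, hmax⟩ := (T.subt u).exists_max_image T.level ⟨u, T.self_mem_subt u⟩
  refine ⟨w, ?_, T.mem_subt.mp hw⟩
  by_contra hleaf
  simp only [IsLeaf, not_forall] at hleaf
  obtain ⟨c, hc, hcne⟩ := hleaf
  have hwc : T.IsAncestor w c := by rw [← hc]; exact T.parent_anc c
  have hanc : T.IsAncestor u c := T.anc_trans (T.mem_subt.mp hw) hwc
  have hcroot : c ≠ T.root := by
    intro h
    rw [h, T.parent_root] at hc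
    exact hcne (h.trans hc)
  have := T.level_parent hcroot
  rw [hc] at this
  have := hmax c (T.mem_subt.mpr hanc)
  omega

lemma subt_card_eq (u : V) : (∑ w ∈ T.subt u, T.childCount w) + 1 = (T.subt u).card := by
  classical
  have hmaps : ∀ c ∈ (T.subt u).erase u, T.parent c ∈ T.subt u := by
    intro c hc
    rw [Finset.mem_erase] at hc
    exact T.mem_subt.mpr (T.anc_parent_of_ne (Ne.symm hc.1) (T.mem_subt.mp hc.2))
  have hcard := Finset.card_eq_sum_card_fiberwise hmaps
  have hfib : ∀ w ∈ T.subt u,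
      (((T.subt u).erase u).filter fun c => T.parent c = w).card = T.childCount w := by
    intro w hw
    congr 1
    apply Finset.ext
    intro c
    simp only [Finset.mem_filter, Finset.mem_erase, Finset.mem_univ, true_and, mem_subt]
    constructor
    · rintro ⟨⟨hcu, hanc⟩, hp⟩
      refine ⟨hp, ?_⟩
      intro hcw
      have hcroot : c = T.root := T.parent_eq_self_iff.mp (by rw [hp, hcw])
      have : u = T.root := T.anc_root_iff.mp (hcroot ▸ hanc)
      exact hcu (hcroot.trans this.symm)
    · rintro ⟨hp, hcw⟩
      have h1 : T.IsAncestor w c := by rw [← hp]; exact T.parent_anc c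
      have hanc : T.IsAncestor u c := T.anc_trans (T.mem_subt.mp hw) h1
      refine ⟨⟨?_, hanc⟩, hp⟩
      intro hcu
      subst hcu
      exact hcw (T.anc_antisymm (T.mem_subt.mp hw) h1)
  have hsum : ∑ w ∈ T.subt u, (((T.subt u).erase u).filter fun c => T.parent c = w).card
      = ∑ w ∈ T.subt u, T.childCount w := Finset.sum_congr rfl hfib
  rw [hsum] at hcard
  rw [← hcard, Finset.card_erase_of_mem (T.self_mem_subt u)]
  have : 0 < (T.subt u).card := Finset.card_pos.mpr ⟨u, T.self_mem_subt u⟩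
  omega

/-- number of internal (non-leaf) vertices in the subtree of `u` -/
def tcount (u : V) : ℕ := ((T.subt u).filter fun w => ¬ T.IsLeaf w).card
/-- number of leaves in the subtree of `u` -/
def lcount (u : V) : ℕ := ((T.subt u).filter fun w => T.IsLeaf w).card

lemma lcount_add_tcount (u : V) :
    T.lcount u + T.tcount u =
      (∑ w ∈ (T.subt u).filter fun w => ¬ T.IsLeaf w, T.childCount w) + 1 := by
  rw [lcount, tcount, Finset.card_filter_add_card_filter_not, ← T.subt_card_eq u]
  congr 1
  rw [Finset.sum_filter_of_ne]
  intro w _ hne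
  rw [← T.childCount_eq_zero_iff]
  exact hne

lemma one_le_tcount {u : V} (h : ¬ T.IsLeaf u) : 1 ≤ T.tcount u :=
  Finset.card_pos.mpr ⟨u, Finset.mem_filter.mpr ⟨T.self_mem_subt u, h⟩⟩


end TreeOn

namespace TreeOn
open Finset
variable {V : Type} [Fintype V] [DecidableEq V] (T : TreeOn V)

/-- the set of ancestors of `v` -/
def ancs (v : V) : Finset V := Finset.univ.filter (T.IsAncestor · v)

lemma mem_ancs {u v : V} : u ∈ T.ancs v ↔ T.IsAncestor u v := by simp [ancs]

lemma card_ancs (v : V) : (T.ancs v).card = T.level v + 1 := by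
  have himg : (Finset.range (T.level v + 1)).image (fun k => T.parent^[k] v) = T.ancs v := by
    apply Finset.ext
    intro u
    simp only [Finset.mem_image, Finset.mem_range, Nat.lt_succ_iff, mem_ancs]
    constructor
    · rintro ⟨k, _, hk⟩
      exact T.isAncestor_iff.mpr ⟨k, hk⟩
    · intro h
      obtain ⟨k, hk⟩ := T.isAncestor_iff.mp h
      rcases le_or_gt k (T.level v) with h' | h'
      · exact ⟨k, h', hk⟩
      · refine ⟨T.level v, le_refl _, ?_⟩
        rw [T.level_spec, ← hk, T.iterate_past (le_of_lt h')]
  rw [← himg, Finset.card_image_of_injOn, Finset.card_range]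
  intro i hi j hj hij
  simp only [Finset.coe_range, Set.mem_Iio, Nat.lt_succ_iff] at hi hj
  have h1 := T.level_iterate hi
  have h2 := T.level_iterate hj
  have hij' : T.parent^[i] v = T.parent^[j] v := hij
  rw [hij'] at h1
  omega

/-- common ancestors -/
def commAncs (v w : V) : Finset V :=
  Finset.univ.filter fun u => T.IsAncestor u v ∧ T.IsAncestor u w

lemma mem_commAncs {u v w : V} :
    u ∈ T.commAncs v w ↔ T.IsAncestor u v ∧ T.IsAncestor u w := by simp [commAncs]

lemma commAncs_eq_ancs (v w : V) :
    ∃ z, T.commAncs v w = T.ancs z ∧ T.lcaLevel v w = T.level z := by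
  have hne : (T.commAncs v w).Nonempty :=
    ⟨T.root, T.mem_commAncs.mpr ⟨T.root_anc v, T.root_anc w⟩⟩
  obtain ⟨z, hz, hmax⟩ := (T.commAncs v w).exists_max_image T.level hne
  obtain ⟨hzv, hzw⟩ := T.mem_commAncs.mp hz
  have hset : T.commAncs v w = T.ancs z := by
    apply Finset.ext
    intro u
    rw [mem_commAncs, mem_ancs]
    constructor
    · rintro ⟨huv, huw⟩
      exact T.anc_of_level_le huv hzv (hmax u (T.mem_commAncs.mpr ⟨huv, huw⟩))
    · intro h
      exact ⟨T.anc_trans h hzv, T.anc_trans h hzw⟩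
  refine ⟨z, hset, ?_⟩
  unfold lcaLevel
  apply le_antisymm
  · apply Finset.sup_le
    intro u hu
    rw [show (Finset.univ.filter fun u => T.IsAncestor u v ∧ T.IsAncestor u w) =
      T.commAncs v w from rfl, hset, mem_ancs] at hu
    exact T.anc_level_le hu
  · exact Finset.le_sup (f := T.level) hz

lemma lcaLevel_card (v w : V) : T.lcaLevel v w + 1 = (T.commAncs v w).card := by
  obtain ⟨z, hset, hlev⟩ := T.commAncs_eq_ancs v w
  rw [hset, hlev, T.card_ancs]

lemma root_mem_commAncs (v w : V) : T.root ∈ T.commAncs v w :=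
  T.mem_commAncs.mpr ⟨T.root_anc v, T.root_anc w⟩

lemma lcaLevel_eq_sum (v w : V) :
    (T.lcaLevel v w : ℝ) = ∑ u ∈ Finset.univ.erase T.root,
      (if T.IsAncestor u v then (1:ℝ) else 0) * (if T.IsAncestor u w then (1:ℝ) else 0) := by
  have h1 : ∑ u ∈ Finset.univ.erase T.root,
      (if T.IsAncestor u v then (1:ℝ) else 0) * (if T.IsAncestor u w then (1:ℝ) else 0)
      = ((Finset.univ.erase T.root).filter
          fun u => T.IsAncestor u v ∧ T.IsAncestor u w).card := by
    rw [Finset.card_filter]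
    push_cast
    apply Finset.sum_congr rfl
    intro u _
    by_cases h1 : T.IsAncestor u v <;> by_cases h2 : T.IsAncestor u w <;> simp [h1, h2]
  rw [h1]
  have h2 : (Finset.univ.erase T.root).filter
      (fun u => T.IsAncestor u v ∧ T.IsAncestor u w) = (T.commAncs v w).erase T.root := by
    apply Finset.ext
    intro u
    simp only [Finset.mem_filter, Finset.mem_erase, Finset.mem_univ, true_and, mem_commAncs]
    tauto
  rw [h2, Finset.card_erase_of_mem (T.root_mem_commAncs v w), ← T.lcaLevel_card]
  push_cast
  ring

/-- The quadratic form of the ancestral matrix. -/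
noncomputable def qform (x : T.Leaf → ℝ) : ℝ :=
  ∑ u ∈ Finset.univ.erase T.root, (∑ l : T.Leaf, if T.IsAncestor u l.1 then x l else 0) ^ 2

lemma dot_ancMatrix (x : T.Leaf → ℝ) : x ⬝ᵥ (T.ancMatrix *ᵥ x) = T.qform x := by
  unfold qform
  have key : ∀ u l, (if T.IsAncestor u l.1 then x l else 0)
      = (if T.IsAncestor u (l:T.Leaf).1 then (1:ℝ) else 0) * x l := by
    intro u l; split_ifs <;> ring
  calc x ⬝ᵥ (T.ancMatrix *ᵥ x)
      = ∑ v : T.Leaf, ∑ w : T.Leaf, ∑ u ∈ Finset.univ.erase T.root,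
          ((if T.IsAncestor u v.1 then (1:ℝ) else 0) * x v) *
          ((if T.IsAncestor u w.1 then (1:ℝ) else 0) * x w) := by
        simp only [dotProduct, mulVec]
        apply Finset.sum_congr rfl; intro v _
        rw [Finset.mul_sum]
        apply Finset.sum_congr rfl; intro w _
        rw [show T.ancMatrix v w = (T.lcaLevel v.1 w.1 : ℝ) from rfl, T.lcaLevel_eq_sum,
          Finset.sum_mul, Finset.mul_sum]
        apply Finset.sum_congr rfl; intro u _
        ring
    _ = ∑ v : T.Leaf, ∑ u ∈ Finset.univ.erase T.root, ∑ w : T.Leaf,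
          ((if T.IsAncestor u v.1 then (1:ℝ) else 0) * x v) *
          ((if T.IsAncestor u w.1 then (1:ℝ) else 0) * x w) := by
        apply Finset.sum_congr rfl; intro v _
        rw [Finset.sum_comm]
    _ = ∑ u ∈ Finset.univ.erase T.root, ∑ v : T.Leaf, ∑ w : T.Leaf,
          ((if T.IsAncestor u v.1 then (1:ℝ) else 0) * x v) *
          ((if T.IsAncestor u w.1 then (1:ℝ) else 0) * x w) := by
        rw [Finset.sum_comm]
    _ = ∑ u ∈ Finset.univ.erase T.root, (∑ l : T.Leaf, if T.IsAncestor u l.1 then x l else 0) ^ 2 := by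
        apply Finset.sum_congr rfl; intro u _
        rw [sq, Finset.sum_mul_sum]
        apply Finset.sum_congr rfl; intro v _
        apply Finset.sum_congr rfl; intro w _
        rw [key u v, key u w]

lemma ancMatrix_isHermitian : T.ancMatrix.IsHermitian := by
  unfold Matrix.IsHermitian
  apply Matrix.ext
  intro v w
  show star (T.ancMatrix w v) = T.ancMatrix v w
  have : T.lcaLevel w.1 v.1 = T.lcaLevel v.1 w.1 := by
    unfold lcaLevel
    congr 1
    apply Finset.filter_congr
    intro u _
    exact and_comm
  simp [ancMatrix, this]

end TreeOn

section Spectral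
open Matrix Finset
variable {L : Type} [Fintype L] [DecidableEq L]

lemma eigset_bddAbove (A : Matrix L L ℝ) :
    BddAbove {μ : ℝ | ∃ x : L → ℝ, x ≠ 0 ∧ A.mulVec x = μ • x} := by
  refine ⟨∑ i, ∑ j, |A i j|, ?_⟩
  rintro μ ⟨x, hx, hAx⟩
  have hne : Nonempty L := by
    by_contra h
    exact hx (funext fun i => absurd (Nonempty.intro i) h)
  obtain ⟨i, -, hmax⟩ := Finset.univ.exists_max_image (fun i => |x i|) univ_nonempty
  have hxi : 0 < |x i| := by
    rcases (Function.ne_iff).mp hx with ⟨j, hj⟩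
    have := hmax j (Finset.mem_univ j)
    have : 0 < |x j| := abs_pos.mpr hj
    have := hmax j (Finset.mem_univ j)
    linarith [hmax j (Finset.mem_univ j), abs_pos.mpr hj]
  have h1 : |μ| * |x i| = |(A.mulVec x) i| := by
    rw [hAx]; simp [abs_mul]
  have h2 : |(A.mulVec x) i| ≤ (∑ j, |A i j|) * |x i| := by
    rw [mulVec, Finset.sum_mul]
    refine le_trans (Finset.abs_sum_le_sum_abs _ _) ?_
    apply Finset.sum_le_sum
    intro j _
    rw [abs_mul]
    exact mul_le_mul_of_nonneg_left (hmax j (Finset.mem_univ j)) (abs_nonneg _)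
  have h3 : |μ| ≤ ∑ j, |A i j| := by
    have := h1.trans_le h2
    exact le_of_mul_le_mul_right this hxi
  calc μ ≤ |μ| := le_abs_self μ
    _ ≤ ∑ j, |A i j| := h3
    _ ≤ ∑ i, ∑ j, |A i j| := Finset.single_le_sum (f := fun i => ∑ j, |A i j|)
        (fun i _ => Finset.sum_nonneg fun j _ => abs_nonneg _) (Finset.mem_univ i)

lemma rayleigh_le_sSup [Nonempty L] (A : Matrix L L ℝ) (hA : A.IsHermitian) (y : L → ℝ) :
    y ⬝ᵥ (A *ᵥ y) ≤ sSup {μ : ℝ | ∃ x : L → ℝ, x ≠ 0 ∧ A.mulVec x = μ • x} * (y ⬝ᵥ y) := by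
  set s := {μ : ℝ | ∃ x : L → ℝ, x ≠ 0 ∧ A.mulVec x = μ • x} with hs
  have hbdd : BddAbove s := eigset_bddAbove A
  have hmem : ∀ i, hA.eigenvalues i ∈ s := by
    intro i
    refine ⟨⇑(hA.eigenvectorBasis i), ?_, hA.mulVec_eigenvectorBasis i⟩
    intro h0
    have hnorm := hA.eigenvectorBasis.orthonormal.1 i
    rw [show (hA.eigenvectorBasis i) = 0 from ?_] at hnorm
    · simp at hnorm
    · ext j
      exact congrFun h0 j
  have hle : ∀ i, hA.eigenvalues i ≤ sSup s := fun i => le_csSup hbdd (hmem i)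
  set U : Matrix L L ℝ := (hA.eigenvectorUnitary : Matrix L L ℝ) with hU
  have hUnit : U * star U = 1 := (Matrix.mem_unitaryGroup_iff).mp hA.eigenvectorUnitary.2
  set z : L → ℝ := (star U) *ᵥ y with hz
  have hstar : star U = Uᵀ := by
    rw [Matrix.star_eq_conjTranspose]
    ext i j
    simp [Matrix.conjTranspose_apply]
  have hdot : ∀ w : L → ℝ, y ⬝ᵥ (U *ᵥ w) = z ⬝ᵥ w := by
    intro w
    rw [Matrix.dotProduct_mulVec, hz, hstar, Matrix.mulVec_transpose]
  have hyy : y ⬝ᵥ y = z ⬝ᵥ z := by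
    have h1 : U *ᵥ z = y := by
      rw [hz, Matrix.mulVec_mulVec, hUnit, Matrix.one_mulVec]
    calc y ⬝ᵥ y = y ⬝ᵥ (U *ᵥ z) := by rw [h1]
      _ = z ⬝ᵥ z := hdot z
  have hAyz : y ⬝ᵥ (A *ᵥ y) = ∑ i, hA.eigenvalues i * (z i)^2 := by
    have hspec := hA.spectral_theorem
    calc y ⬝ᵥ (A *ᵥ y)
        = y ⬝ᵥ ((U * (Matrix.diagonal (RCLike.ofReal ∘ hA.eigenvalues) * star U)) *ᵥ y) := by
          rw [← Matrix.mul_assoc]; exact (congrArg (fun M => y ⬝ᵥ M *ᵥ y) hspec).trans rfl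
      _ = y ⬝ᵥ (U *ᵥ ((Matrix.diagonal (RCLike.ofReal ∘ hA.eigenvalues)) *ᵥ z)) := by
          rw [Matrix.mulVec_mulVec, Matrix.mulVec_mulVec, Matrix.mul_assoc]
      _ = z ⬝ᵥ ((Matrix.diagonal (RCLike.ofReal ∘ hA.eigenvalues)) *ᵥ z) := hdot _
      _ = ∑ i, hA.eigenvalues i * (z i)^2 := by
          rw [dotProduct]
          simp only [Matrix.mulVec_diagonal, Function.comp_apply]
          apply Finset.sum_congr rfl; intro i _
          have h : (RCLike.ofReal (hA.eigenvalues i) : ℝ) = hA.eigenvalues i := rfl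
          rw [h]; ring
  rw [hAyz, hyy]
  calc ∑ i, hA.eigenvalues i * (z i)^2
      ≤ ∑ i, sSup s * (z i)^2 := by
        apply Finset.sum_le_sum
        intro i _
        exact mul_le_mul_of_nonneg_right (hle i) (sq_nonneg _)
    _ = sSup s * (z ⬝ᵥ z) := by
        rw [dotProduct, Finset.mul_sum]
        apply Finset.sum_congr rfl; intro i _
        ring

end Spectral

section FinUtil
open Finset
variable {n : ℕ}

lemma strictMono_le_val {k : ℕ} {f : Fin k → Fin n} (hf : StrictMono f) :
    ∀ j : Fin k, (j : ℕ) ≤ (f j : ℕ) := by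
  have key : ∀ m : ℕ, ∀ j : Fin k, j.1 = m → m ≤ (f j : ℕ) := by
    intro m
    induction m with
    | zero => intro j _; omega
    | succ p ih =>
      intro j hj
      have hp : p < k := by omega
      have h1 := ih ⟨p, hp⟩ rfl
      have hlt : (⟨p, hp⟩ : Fin k) < j := by
        rw [Fin.lt_def]; simp; omega
      have h2 := hf hlt
      rw [Fin.lt_def] at h2
      omega
  exact fun j => key j.1 j rfl

lemma downclosed_eq_prefix (K : Finset (Fin n))
    (h : ∀ i j : Fin n, i ≤ j → j ∈ K → i ∈ K) :
    K = univ.filter fun i => i.1 < K.card := by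
  ext j
  simp only [mem_filter, mem_univ, true_and]
  constructor
  · intro hj
    have hsub : Finset.Iic j ⊆ K := fun i hi => h i j (Finset.mem_Iic.mp hi) hj
    have hc := Finset.card_le_card hsub
    rw [Fin.card_Iic] at hc
    omega
  · intro hj
    by_contra hjK
    have hsub : K ⊆ Finset.Iio j := by
      intro i hi
      rw [Finset.mem_Iio]
      by_contra hij
      push_neg at hij
      exact hjK (h j i hij hi)
    have hc := Finset.card_le_card hsub
    rw [Fin.card_Iio] at hc
    omega

lemma card_prefix {c : ℕ} (hc : c ≤ n) :
    (univ.filter fun i : Fin n => i.1 < c).card = c := by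
  have himg : (univ : Finset (Fin c)).image (Fin.castLE hc)
      = univ.filter fun i : Fin n => i.1 < c := by
    ext j
    simp only [mem_image, mem_univ, true_and, mem_filter]
    constructor
    · rintro ⟨i, -, rfl⟩
      exact i.2
    · intro hj
      exact ⟨⟨j.1, hj⟩, rfl⟩
  rw [← himg, Finset.card_image_of_injective _ (Fin.castLE_injective hc), card_univ,
    Fintype.card_fin]

lemma sum_le_prefix_sum {M : Type} [AddCommMonoid M] [PartialOrder M] [IsOrderedAddMonoid M] (g : Fin n → M) (hg : Antitone g)
    (K : Finset (Fin n)) :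
    ∑ i ∈ K, g i ≤ ∑ i ∈ univ.filter (fun i : Fin n => i.1 < K.card), g i := by
  have hKn : K.card ≤ n := le_trans (Finset.card_le_card (Finset.subset_univ K))
    (by rw [card_univ, Fintype.card_fin])
  set e := K.orderIsoOfFin rfl with he
  have h1 : ∑ i ∈ K, g i = ∑ j : Fin K.card, g (e j).1 := by
    rw [← Finset.sum_coe_sort K g]
    exact (Equiv.sum_comp e.toEquiv (fun x : ↥K => g x.1)).symm
  have hsm : StrictMono (fun j : Fin K.card => ((e j : ↥K) : Fin n)) := by
    intro a b hab
    exact e.strictMono hab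
  have h2 : ∀ j : Fin K.card, g (e j).1 ≤ g (Fin.castLE hKn j) := by
    intro j
    apply hg
    have := strictMono_le_val hsm j
    rw [Fin.le_def]
    simpa using this
  have h3 : ∑ j : Fin K.card, g (Fin.castLE hKn j)
      = ∑ i ∈ univ.filter (fun i : Fin n => i.1 < K.card), g i := by
    rw [← Finset.sum_image (f := g) (g := Fin.castLE hKn)
      (fun a _ b _ h => Fin.castLE_injective hKn h)]
    congr 1
    ext j
    simp only [mem_image, mem_univ, true_and, mem_filter]
    constructor
    · rintro ⟨i, -, rfl⟩
      exact i.2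
    · intro hj
      exact ⟨⟨j.1, hj⟩, rfl⟩
  calc ∑ i ∈ K, g i = ∑ j : Fin K.card, g (e j).1 := h1
    _ ≤ ∑ j : Fin K.card, g (Fin.castLE hKn j) := Finset.sum_le_sum fun j _ => h2 j
    _ = _ := h3

lemma prefix_sum_le {M : Type} [AddCommMonoid M] [PartialOrder M] [IsOrderedAddMonoid M] (g : Fin n → M) (K : Finset (Fin n))
    (h : ∀ i ∈ K, ∀ i' , i' ∉ K → g i' ≤ g i) :
    ∑ i ∈ univ.filter (fun i : Fin n => i.1 < K.card), g i ≤ ∑ i ∈ K, g i := by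
  have hKn : K.card ≤ n := le_trans (Finset.card_le_card (Finset.subset_univ K))
    (by rw [card_univ, Fintype.card_fin])
  set P := univ.filter (fun i : Fin n => i.1 < K.card) with hP
  have hPcard : P.card = K.card := card_prefix hKn
  have hsplitP : ∑ i ∈ P ∩ K, g i + ∑ i ∈ P \ K, g i = ∑ i ∈ P, g i :=
    Finset.sum_inter_add_sum_sdiff P K g
  have hsplitK : ∑ i ∈ K ∩ P, g i + ∑ i ∈ K \ P, g i = ∑ i ∈ K, g i :=
    Finset.sum_inter_add_sum_sdiff K P g
  have hcardeq : (P \ K).card = (K \ P).card := by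
    have c1 : (P ∩ K).card + (P \ K).card = P.card := Finset.card_inter_add_card_sdiff P K
    have c2 : (K ∩ P).card + (K \ P).card = K.card := Finset.card_inter_add_card_sdiff K P
    rw [Finset.inter_comm] at c2
    omega
  have e := Finset.equivOfCardEq hcardeq
  have hdiff : ∑ i ∈ P \ K, g i ≤ ∑ i ∈ K \ P, g i := by
    rw [← Finset.sum_coe_sort (P \ K) g, ← Finset.sum_coe_sort (K \ P) g]
    rw [← Equiv.sum_comp e (fun y : ↥(K \ P) => g y.1)]
    apply Finset.sum_le_sum
    intro x _
    apply h
    · exact (Finset.mem_sdiff.mp (e x).2).1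
    · exact (Finset.mem_sdiff.mp x.2).2
  have hinter : P ∩ K = K ∩ P := Finset.inter_comm P K
  calc ∑ i ∈ P, g i = ∑ i ∈ P ∩ K, g i + ∑ i ∈ P \ K, g i := hsplitP.symm
    _ ≤ ∑ i ∈ P ∩ K, g i + ∑ i ∈ K \ P, g i := add_le_add_right hdiff _
    _ = ∑ i ∈ K ∩ P, g i + ∑ i ∈ K \ P, g i := by rw [hinter]
    _ = ∑ i ∈ K, g i := hsplitK

lemma antitone_le_iff_lt_card (g : Fin n → ℕ) (hg : Antitone g) (c : ℕ) (j : Fin n) :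
    c ≤ g j ↔ j.1 < (univ.filter fun i => c ≤ g i).card := by
  set K := univ.filter fun i => c ≤ g i with hK
  have hdc : ∀ i j : Fin n, i ≤ j → j ∈ K → i ∈ K := by
    intro i j hij hj
    rw [hK, mem_filter] at hj ⊢
    exact ⟨mem_univ _, le_trans hj.2 (hg hij)⟩
  have := downclosed_eq_prefix K hdc
  constructor
  · intro hc
    have hj : j ∈ K := mem_filter.mpr ⟨mem_univ _, hc⟩
    rw [this, mem_filter] at hj
    exact hj.2
  · intro hc
    have hj : j ∈ K := by
      rw [this, mem_filter]
      exact ⟨mem_univ _, hc⟩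
    exact (mem_filter.mp hj).2

lemma antitone_eq_of_multiset (f g : Fin n → ℕ) (hf : Antitone f) (hg : Antitone g)
    (h : Multiset.map f Finset.univ.val = Multiset.map g Finset.univ.val) : f = g := by
  have hcard : ∀ c : ℕ, (univ.filter fun i => c ≤ f i).card
      = (univ.filter fun i => c ≤ g i).card := by
    intro c
    have h1 : ∀ (q : Fin n → ℕ), (univ.filter fun i => c ≤ q i).card
        = Multiset.countP (fun m => c ≤ m) (Multiset.map q Finset.univ.val) := by
      intro q
      rw [Multiset.countP_map]
      rfl
    rw [h1, h1, h]
  funext j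
  apply le_antisymm
  · rw [antitone_le_iff_lt_card g hg (f j) j, ← hcard]
    exact (antitone_le_iff_lt_card f hf (f j) j).mp le_rfl
  · rw [antitone_le_iff_lt_card f hf (g j) j, hcard]
    exact (antitone_le_iff_lt_card g hg (g j) j).mp le_rfl

lemma exists_antitone_equiv {α : Type} [Fintype α] [DecidableEq α] {β : Type} [LinearOrder β]
    (g : α → β) {N : ℕ} (hN : Fintype.card α = N) :
    ∃ e : Fin N ≃ α, Antitone (g ∘ e) := by
  subst hN
  let e0 := (Fintype.equivFin α).symm
  let p := Tuple.sort (g ∘ e0)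
  refine ⟨(Fin.revPerm.trans p).trans e0, ?_⟩
  have hmono := Tuple.monotone_sort (g ∘ e0)
  intro a b hab
  have hrev : Fin.rev b ≤ Fin.rev a := Fin.rev_le_rev.mpr hab
  exact hmono hrev

lemma antitone_eq_of_counts {n : ℕ} (f g : Fin n → ℕ) (hf : Antitone f) (hg : Antitone g)
    (h : ∀ c : ℕ, (Finset.univ.filter fun i => c ≤ f i).card
      = (Finset.univ.filter fun i => c ≤ g i).card) : f = g := by
  funext j
  apply le_antisymm
  · rw [antitone_le_iff_lt_card g hg (f j) j, ← h]
    exact (antitone_le_iff_lt_card f hf (f j) j).mp le_rfl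
  · rw [antitone_le_iff_lt_card f hf (g j) j, h]
    exact (antitone_le_iff_lt_card g hg (g j) j).mp le_rfl

lemma sum_filter_equiv_subtype {α M : Type} [Fintype α] [DecidableEq α] [AddCommMonoid M] {S : Finset α}
    {N : ℕ} (e : Fin N ≃ ↥S) (P : α → Prop) [DecidablePred P] (hP : ∀ a, P a → a ∈ S)
    (f : α → M) :
    ∑ j ∈ Finset.univ.filter (fun j => P (e j).1), f (e j).1
      = ∑ a ∈ Finset.univ.filter P, f a := by
  apply Finset.sum_bij (i := fun j (_ : j ∈ Finset.univ.filter (fun j => P (e j).1)) => (e j).1)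
  · intro j hj
    rw [Finset.mem_filter] at hj ⊢
    exact ⟨Finset.mem_univ _, hj.2⟩
  · intro a ha b hb hab
    exact e.injective (Subtype.ext hab)
  · intro a ha
    rw [Finset.mem_filter] at ha
    refine ⟨e.symm ⟨a, hP a ha.2⟩, ?_, ?_⟩
    · rw [Finset.mem_filter]
      refine ⟨Finset.mem_univ _, ?_⟩
      rw [Equiv.apply_symm_apply]
      exact ha.2
    · rw [Equiv.apply_symm_apply]
  · intro j hj
    rfl

lemma card_filter_equiv_subtype {α : Type} [Fintype α] [DecidableEq α] {S : Finset α}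
    {N : ℕ} (e : Fin N ≃ ↥S) (P : α → Prop) [DecidablePred P] (hP : ∀ a, P a → a ∈ S) :
    (Finset.univ.filter fun j => P (e j).1).card = (Finset.univ.filter P).card := by
  rw [Finset.card_eq_sum_ones, Finset.card_eq_sum_ones]
  exact sum_filter_equiv_subtype e P hP (fun _ => 1)

lemma sum_filter_equiv {α M : Type} [Fintype α] [DecidableEq α] [AddCommMonoid M]
    {N : ℕ} (e : Fin N ≃ α) (P : α → Prop) [DecidablePred P] (f : α → M) :
    ∑ j ∈ Finset.univ.filter (fun j => P (e j)), f (e j)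
      = ∑ a ∈ Finset.univ.filter P, f a := by
  apply Finset.sum_bij (i := fun j (_ : j ∈ Finset.univ.filter (fun j => P (e j))) => e j)
  · intro j hj
    rw [Finset.mem_filter] at hj ⊢
    exact ⟨Finset.mem_univ _, hj.2⟩
  · intro a ha b hb hab
    exact e.injective hab
  · intro a ha
    rw [Finset.mem_filter] at ha
    refine ⟨e.symm a, ?_, ?_⟩
    · rw [Finset.mem_filter]
      refine ⟨Finset.mem_univ _, ?_⟩
      rw [Equiv.apply_symm_apply]
      exact ha.2
    · rw [Equiv.apply_symm_apply]
  · intro j hj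
    rfl

lemma card_filter_equiv {α : Type} [Fintype α] [DecidableEq α]
    {N : ℕ} (e : Fin N ≃ α) (P : α → Prop) [DecidablePred P] :
    (Finset.univ.filter fun j => P (e j)).card = (Finset.univ.filter P).card := by
  rw [Finset.card_eq_sum_ones, Finset.card_eq_sum_ones]
  exact sum_filter_equiv e P (fun _ => 1)

lemma sum_equiv_all {α M : Type} [Fintype α] [AddCommMonoid M]
    {N : ℕ} (e : Fin N ≃ α) (f : α → M) :
    ∑ j : Fin N, f (e j) = ∑ a : α, f a := Equiv.sum_comp e f

end FinUtil

section FinUtil2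
lemma strictAnti_lb {q : ℕ} (f : Fin q → ℕ) (hf : StrictAnti f) (hpos : ∀ j, 1 ≤ f j) :
    ∀ k : Fin q, q ≤ f k + k.1 := by
  have key : ∀ d : ℕ, ∀ k : Fin q, k.1 + d + 1 = q → d + 1 ≤ f k := by
    intro d
    induction d with
    | zero => intro k _; exact hpos k
    | succ p ih =>
      intro k hk
      have hk' : k.1 + 1 < q := by omega
      have h1 := ih ⟨k.1 + 1, hk'⟩ (by simp; omega)
      have h2 : f ⟨k.1 + 1, hk'⟩ < f k := by
        apply hf
        rw [Fin.lt_def]; simp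
      omega
  intro k
  have := key (q - 1 - k.1) k (by have := k.2; omega)
  have := k.2
  omega
end FinUtil2

namespace TreeOn
open Finset
variable {V : Type} [Fintype V] [DecidableEq V] (T : TreeOn V)

lemma count_outdeg (p : ℕ → Prop) [DecidablePred p] :
    (Finset.univ.filter fun v => p (T.childCount v)).card = T.outdegSeq.countP p := by
  rw [outdegSeq, Multiset.countP_map]
  rfl

lemma level_strict {u v : V} (h : T.IsAncestor u v) (hne : u ≠ v) : T.level u < T.level v := by
  have h1 := T.anc_level_le h
  rcases h1.lt_or_eq with h2 | h2
  · exact h2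
  · exact absurd (T.anc_eq_of_level_eq h h2) hne

lemma root_not_isLeaf (h : 1 < Fintype.card V) : ¬ T.IsLeaf T.root := by
  obtain ⟨v, hv⟩ := Fintype.exists_ne_of_one_lt_card h T.root
  have hlev : 1 ≤ T.level v := by
    by_contra h'
    push_neg at h'
    exact hv (T.level_eq_zero.mp (by omega))
  set c := T.parent^[T.level v - 1] v with hc
  have hpc : T.parent c = T.root := by
    have h5 := Function.iterate_succ_apply' T.parent (T.level v - 1) v
    rw [show (T.level v - 1).succ = T.level v from by omega] at h5
    rw [hc, ← h5]
    exact T.level_spec v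
  have hcroot : c ≠ T.root := by
    have hli := T.level_iterate (v := v) (k := T.level v - 1) (by omega)
    intro he
    rw [← hc, he] at hli
    have h0 : T.level T.root = 0 := T.level_eq_zero.mpr rfl
    omega
  intro hleaf
  exact hcroot (hleaf c hpc)

lemma card_leafFilter_eq_lcount (u : V) :
    (Finset.univ.filter fun l : T.Leaf => T.IsAncestor u l.1).card = T.lcount u := by
  unfold lcount
  apply Finset.card_bij (fun l _ => l.1)
  · intro l hl
    rw [Finset.mem_filter] at hl ⊢
    exact ⟨T.mem_subt.mpr hl.2, l.2⟩
  · intro a ha b hb hab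
    exact Subtype.ext hab
  · intro w hw
    rw [Finset.mem_filter] at hw
    exact ⟨⟨w, hw.2⟩, Finset.mem_filter.mpr ⟨Finset.mem_univ _, T.mem_subt.mp hw.1⟩, rfl⟩

lemma tcount_le_internal (u : V) :
    T.tcount u ≤ (Finset.univ.filter fun v => ¬ T.IsLeaf v).card := by
  apply Finset.card_le_card
  intro w hw
  rw [Finset.mem_filter] at hw ⊢
  exact ⟨Finset.mem_univ _, hw.2⟩

lemma tcount_lt_of_anc {u v : V} (h : T.IsAncestor u v) (hne : u ≠ v) (hu : ¬ T.IsLeaf u) :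
    T.tcount v < T.tcount u := by
  have hsub : (T.subt v).filter (fun w => ¬ T.IsLeaf w)
      ⊆ ((T.subt u).filter fun w => ¬ T.IsLeaf w).erase u := by
    intro w hw
    rw [Finset.mem_filter, mem_subt] at hw
    rw [Finset.mem_erase, Finset.mem_filter, mem_subt]
    refine ⟨?_, T.anc_trans h hw.1, hw.2⟩
    intro he
    subst he
    exact hne (T.anc_antisymm h hw.1)
  have h1 := Finset.card_le_card hsub
  have h2 : u ∈ (T.subt u).filter fun w => ¬ T.IsLeaf w :=
    Finset.mem_filter.mpr ⟨T.self_mem_subt u, hu⟩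
  rw [Finset.card_erase_of_mem h2] at h1
  have h3 : 1 ≤ T.tcount u := T.one_le_tcount hu
  unfold tcount at *
  omega

/-- the non-root internal vertices -/
def backset : Finset V := Finset.univ.filter fun v => ¬ T.IsLeaf v ∧ v ≠ T.root

lemma backset_card (hroot : ¬ T.IsLeaf T.root) :
    T.backset.card + 1 = (Finset.univ.filter fun v => ¬ T.IsLeaf v).card := by
  have h : T.backset = (Finset.univ.filter fun v => ¬ T.IsLeaf v).erase T.root := by
    ext v
    simp only [backset, Finset.mem_filter, Finset.mem_erase, Finset.mem_univ, true_and]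
    tauto
  have hmem : T.root ∈ Finset.univ.filter fun v => ¬ T.IsLeaf v :=
    Finset.mem_filter.mpr ⟨Finset.mem_univ _, hroot⟩
  rw [h, Finset.card_erase_of_mem hmem]
  have := Finset.card_pos.mpr ⟨T.root, hmem⟩
  omega

lemma us_counting {s : ℕ} (hs : 1 ≤ s)
    (hne : (T.backset.filter fun u => s ≤ T.tcount u).Nonempty) :
    (T.backset.filter fun u => s ≤ T.tcount u).card + s
      ≤ (Finset.univ.filter fun v => ¬ T.IsLeaf v).card := by
  set A := T.backset.filter fun u => s ≤ T.tcount u with hA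
  obtain ⟨u, hu, hmax⟩ := A.exists_max_image T.level hne
  have huA := hu
  rw [hA, Finset.mem_filter, backset, Finset.mem_filter] at hu
  obtain ⟨⟨-, huint, huroot⟩, hut⟩ := hu
  set B := ((T.subt u).filter fun w => ¬ T.IsLeaf w).erase u with hB
  have hBcard : B.card + 1 = T.tcount u := by
    rw [hB, Finset.card_erase_of_mem
      (Finset.mem_filter.mpr ⟨T.self_mem_subt u, huint⟩)]
    have := T.one_le_tcount huint
    unfold tcount at *
    omega
  have hdisjAB : Disjoint A B := by
    rw [Finset.disjoint_left]
    intro w hwA hwB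
    rw [hB, Finset.mem_erase, Finset.mem_filter, mem_subt] at hwB
    have hlt := T.level_strict hwB.2.1 (Ne.symm hwB.1)
    have := hmax w hwA
    omega
  have hrA : T.root ∉ A := by
    rw [hA, Finset.mem_filter, backset, Finset.mem_filter]
    tauto
  have hrB : T.root ∉ B := by
    rw [hB, Finset.mem_erase, Finset.mem_filter, mem_subt]
    rintro ⟨-, hanc, -⟩
    exact huroot (T.anc_root_iff.mp hanc)
  have hsub : insert T.root (A ∪ B) ⊆ Finset.univ.filter fun v => ¬ T.IsLeaf v := by
    intro w hw
    rw [Finset.mem_insert, Finset.mem_union] at hw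
    rw [Finset.mem_filter]
    refine ⟨Finset.mem_univ _, ?_⟩
    rcases hw with rfl | hw | hw
    · have : 1 < Fintype.card V := by
        by_contra hc
        push_neg at hc
        -- card V = 1 : then u = root, contradiction
        have : u = T.root := by
          have h1 := Fintype.card_le_one_iff.mp hc
          exact h1 u T.root
        exact huroot this
      exact T.root_not_isLeaf this
    · rw [hA, Finset.mem_filter, backset, Finset.mem_filter] at hw; tauto
    · rw [hB, Finset.mem_erase, Finset.mem_filter] at hw; tauto
  have hcard : (insert T.root (A ∪ B)).card = A.card + B.card + 1 := by
    rw [Finset.card_insert_of_notMem (by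
      rw [Finset.mem_union]; tauto), Finset.card_union_of_disjoint hdisjAB]
  have := Finset.card_le_card hsub
  rw [hcard] at this
  omega

lemma sum_leaf_sq (f : T.Leaf → ℝ) :
    ∑ u ∈ Finset.univ.filter T.IsLeaf,
      (∑ l : T.Leaf, if T.IsAncestor u l.1 then f l else 0) ^ 2
      = ∑ l : T.Leaf, (f l) ^ 2 := by
  apply Finset.sum_bij (i := fun (u : V) (hu : u ∈ Finset.univ.filter T.IsLeaf) =>
    (⟨u, (Finset.mem_filter.mp hu).2⟩ : T.Leaf))
  · intro u hu
    exact Finset.mem_univ _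
  · intro a ha b hb hab
    exact congrArg Subtype.val hab
  · intro l _
    exact ⟨l.1, Finset.mem_filter.mpr ⟨Finset.mem_univ _, l.2⟩, Subtype.ext rfl⟩
  · intro u hu
    have hleaf := (Finset.mem_filter.mp hu).2
    have hiff : ∀ l' : T.Leaf, (T.IsAncestor u l'.1) ↔ l' = ⟨u, hleaf⟩ := by
      intro l'
      constructor
      · intro h
        exact Subtype.ext (T.leaf_anc_eq hleaf h).symm
      · rintro rfl
        exact T.anc_refl _
    have hinner : (∑ l' : T.Leaf, if T.IsAncestor u l'.1 then f l' else 0)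
        = f ⟨u, hleaf⟩ := by
      calc (∑ l' : T.Leaf, if T.IsAncestor u l'.1 then f l' else 0)
          = ∑ l' : T.Leaf, if l' = ⟨u, hleaf⟩ then f l' else 0 := by
            apply Finset.sum_congr rfl
            intro l' _
            exact if_congr (hiff l') rfl rfl
        _ = f ⟨u, hleaf⟩ := by simp
    rw [hinner]

end TreeOn

namespace TreeOn
open Finset
variable {V : Type} [Fintype V] [DecidableEq V]

lemma internal_card_eq {m : ℕ} (T : TreeOn V)
    (eT : Fin m ≃ ↥(Finset.univ.filter fun v : V => ¬T.IsLeaf v)) :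
    m = (Finset.univ.filter fun v : V => ¬T.IsLeaf v).card := by
  rw [← Fintype.card_coe, ← Fintype.card_fin m]
  exact Fintype.card_congr eT

lemma cc_pos_of_internal (T : TreeOn V) {v : V} (h : ¬ T.IsLeaf v) : 1 ≤ T.childCount v := by
  have := T.childCount_eq_zero_iff (v := v)
  by_contra hc
  push_neg at hc
  exact h (this.mp (by omega))

lemma lcount_le_F (T : TreeOn V) {m : ℕ}
    (eT : Fin m ≃ ↥(Finset.univ.filter fun v : V => ¬T.IsLeaf v))
    (hanti : Antitone fun j : Fin m => T.childCount (eT j).1) (u : V) :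
    T.lcount u ≤ 1 + ∑ j ∈ Finset.univ.filter (fun j : Fin m => j.1 < T.tcount u),
      (T.childCount (eT j).1 - 1) := by
  classical
  have hbase := T.lcount_add_tcount u
  set P : V → Prop := fun a => T.IsAncestor u a ∧ ¬T.IsLeaf a with hP
  have hfil : (T.subt u).filter (fun w => ¬T.IsLeaf w) = Finset.univ.filter P := by
    ext w
    simp only [subt, Finset.filter_filter, Finset.mem_filter, Finset.mem_univ, true_and, hP]
  have hPmem : ∀ a, P a → a ∈ Finset.univ.filter fun v : V => ¬T.IsLeaf v := by
    intro a ha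
    exact Finset.mem_filter.mpr ⟨Finset.mem_univ _, ha.2⟩
  set K := Finset.univ.filter (fun j : Fin m => P (eT j).1) with hK
  have hsum : ∑ j ∈ K, T.childCount (eT j).1
      = ∑ w ∈ (T.subt u).filter (fun w => ¬T.IsLeaf w), T.childCount w := by
    rw [hfil]
    exact sum_filter_equiv_subtype eT P hPmem T.childCount
  have hKcard : K.card = T.tcount u := by
    rw [hK, card_filter_equiv_subtype eT P hPmem]
    rw [tcount, hfil]
  have hpre : ∑ j ∈ K, T.childCount (eT j).1
      ≤ ∑ j ∈ Finset.univ.filter (fun j : Fin m => j.1 < T.tcount u),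
          T.childCount (eT j).1 := by
    have h := sum_le_prefix_sum (fun j => T.childCount (eT j).1) hanti K
    rw [hKcard] at h
    exact h
  have htm : T.tcount u ≤ m := by
    have h1 := T.tcount_le_internal u
    have h2 := T.internal_card_eq eT
    omega
  have hone : ∀ j : Fin m, 1 ≤ T.childCount (eT j).1 := by
    intro j
    have h2 := (eT j).2
    rw [Finset.mem_filter] at h2
    exact T.cc_pos_of_internal h2.2
  have hsplit : ∑ j ∈ Finset.univ.filter (fun j : Fin m => j.1 < T.tcount u),
      T.childCount (eT j).1
      = (∑ j ∈ Finset.univ.filter (fun j : Fin m => j.1 < T.tcount u),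
          (T.childCount (eT j).1 - 1)) + T.tcount u := by
    rw [Finset.sum_congr rfl (g := fun j => (T.childCount (eT j).1 - 1) + 1)
      (fun j _ => by
        have := hone j
        show T.childCount (eT j).1 = T.childCount (eT j).1 - 1 + 1
        omega)]
    rw [Finset.sum_add_distrib, Finset.sum_const, smul_eq_mul, mul_one, card_prefix htm]
  omega

lemma F_le_lcount {W : Type} [Fintype W] [DecidableEq W] (G : TreeOn W)
    (hG : G.IsGreedyCaterpillar) {m : ℕ}
    (eG : Fin m ≃ ↥(Finset.univ.filter fun v : W => ¬G.IsLeaf v))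
    (hanti : Antitone fun j : Fin m => G.childCount (eG j).1) {v : W} (hv : ¬ G.IsLeaf v) :
    1 + ∑ j ∈ Finset.univ.filter (fun j : Fin m => j.1 < G.tcount v),
      (G.childCount (eG j).1 - 1) ≤ G.lcount v := by
  classical
  have hbase := G.lcount_add_tcount v
  set P : W → Prop := fun a => G.IsAncestor v a ∧ ¬G.IsLeaf a with hP
  have hfil : (G.subt v).filter (fun w => ¬G.IsLeaf w) = Finset.univ.filter P := by
    ext w
    simp only [subt, Finset.filter_filter, Finset.mem_filter, Finset.mem_univ, true_and, hP]
  have hPmem : ∀ a, P a → a ∈ Finset.univ.filter fun w : W => ¬G.IsLeaf w := by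
    intro a ha
    exact Finset.mem_filter.mpr ⟨Finset.mem_univ _, ha.2⟩
  set K := Finset.univ.filter (fun j : Fin m => P (eG j).1) with hK
  have hsum : ∑ j ∈ K, G.childCount (eG j).1
      = ∑ w ∈ (G.subt v).filter (fun w => ¬G.IsLeaf w), G.childCount w := by
    rw [hfil]
    exact sum_filter_equiv_subtype eG P hPmem G.childCount
  have hKcard : K.card = G.tcount v := by
    rw [hK, card_filter_equiv_subtype eG P hPmem]
    rw [tcount, hfil]
  have hupper : ∀ j ∈ K, ∀ j', j' ∉ K → G.childCount (eG j').1 ≤ G.childCount (eG j).1 := by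
    intro j hj j' hj'
    rw [hK, Finset.mem_filter] at hj hj'
    have hw : P (eG j).1 := hj.2
    have hw'int : ¬ G.IsLeaf (eG j').1 := by
      have h2 := (eG j').2
      rw [Finset.mem_filter] at h2
      exact h2.2
    have hnotP : ¬ P (eG j').1 := fun hc => hj' ⟨Finset.mem_univ _, hc⟩
    have hnanc : ¬ G.IsAncestor v (eG j').1 := by
      intro hc
      exact hnotP ⟨hc, hw'int⟩
    have hanc' : G.IsAncestor (eG j').1 v := by
      rcases hG.1 v (eG j').1 hv hw'int with h | h
      · exact absurd h hnanc
      · exact h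
    have htrans : G.IsAncestor (eG j').1 (eG j).1 := G.anc_trans hanc' hw.1
    exact hG.2 _ _ hw'int hw.2 htrans
  have hpre : ∑ j ∈ Finset.univ.filter (fun j : Fin m => j.1 < G.tcount v),
      G.childCount (eG j).1 ≤ ∑ j ∈ K, G.childCount (eG j).1 := by
    have h := prefix_sum_le (fun j => G.childCount (eG j).1) K hupper
    rw [hKcard] at h
    exact h
  have htm : G.tcount v ≤ m := by
    have h1 := G.tcount_le_internal v
    have h2 := G.internal_card_eq eG
    omega
  have hone : ∀ j : Fin m, 1 ≤ G.childCount (eG j).1 := by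
    intro j
    have h2 := (eG j).2
    rw [Finset.mem_filter] at h2
    exact G.cc_pos_of_internal h2.2
  have hsplit : ∑ j ∈ Finset.univ.filter (fun j : Fin m => j.1 < G.tcount v),
      G.childCount (eG j).1
      = (∑ j ∈ Finset.univ.filter (fun j : Fin m => j.1 < G.tcount v),
          (G.childCount (eG j).1 - 1)) + G.tcount v := by
    rw [Finset.sum_congr rfl (g := fun j => (G.childCount (eG j).1 - 1) + 1)
      (fun j _ => by
        have := hone j
        show G.childCount (eG j).1 = G.childCount (eG j).1 - 1 + 1
        omega)]
    rw [Finset.sum_add_distrib, Finset.sum_const, smul_eq_mul, mul_one, card_prefix htm]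
  omega

lemma qform_split (T : TreeOn V) (hroot : ¬ T.IsLeaf T.root) (x : T.Leaf → ℝ) :
    T.qform x = (∑ l : T.Leaf, x l ^ 2)
      + ∑ u ∈ T.backset, (∑ l : T.Leaf, if T.IsAncestor u l.1 then x l else 0) ^ 2 := by
  unfold qform
  rw [← Finset.sum_filter_add_sum_filter_not (Finset.univ.erase T.root) T.IsLeaf]
  congr 1
  · have h1 : (Finset.univ.erase T.root).filter T.IsLeaf = Finset.univ.filter T.IsLeaf := by
      ext u
      simp only [Finset.mem_filter, Finset.mem_erase, Finset.mem_univ, true_and, and_true]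
      constructor
      · tauto
      · intro hu
        refine ⟨?_, hu⟩
        intro he
        subst he
        exact hroot hu
    rw [h1, T.sum_leaf_sq]
  · congr 1
    ext u
    simp only [backset, Finset.mem_filter, Finset.mem_erase, Finset.mem_univ, true_and]
    tauto

end TreeOn

namespace TreeOn
open Finset
variable {W : Type} [Fintype W] [DecidableEq W]

lemma caterpillar_upper_set (G : TreeOn W) (hGc : G.IsCaterpillar) {v : W}
    (hv : v ∈ G.backset) (l : G.Leaf) :
    G.IsAncestor v l.1 ↔ (G.backset.filter fun v' => G.IsAncestor v' v).card
      ≤ (G.backset.filter fun v' => G.IsAncestor v' l.1).card := by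
  have hvint : ¬ G.IsLeaf v := by
    rw [backset, Finset.mem_filter] at hv
    exact hv.2.1
  constructor
  · intro h
    apply Finset.card_le_card
    intro v' hv'
    rw [Finset.mem_filter] at hv' ⊢
    exact ⟨hv'.1, G.anc_trans hv'.2 h⟩
  · intro hc
    by_contra hnanc
    have hsub : G.backset.filter (fun v' => G.IsAncestor v' l.1)
        ⊆ (G.backset.filter fun v' => G.IsAncestor v' v).erase v := by
      intro v' hv'
      rw [Finset.mem_filter] at hv'
      have hv'int : ¬ G.IsLeaf v' := by
        rw [backset, Finset.mem_filter] at hv'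
        exact hv'.1.2.1
      have hanc : G.IsAncestor v' v := by
        rcases hGc v v' hvint hv'int with h | h
        · exact absurd (G.anc_trans h hv'.2) hnanc
        · exact h
      rw [Finset.mem_erase, Finset.mem_filter]
      refine ⟨?_, hv'.1, hanc⟩
      intro he
      subst he
      exact hnanc hv'.2
    have h1 := Finset.card_le_card hsub
    have hvmem : v ∈ G.backset.filter fun v' => G.IsAncestor v' v :=
      Finset.mem_filter.mpr ⟨hv, G.anc_refl v⟩
    rw [Finset.card_erase_of_mem hvmem] at h1
    have h2 := Finset.card_pos.mpr ⟨v, hvmem⟩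
    omega

lemma gsum_prefix (G : TreeOn W) (hGc : G.IsCaterpillar) {n : ℕ}
    (f2 : Fin n ≃ G.Leaf)
    (hf2 : Antitone fun j : Fin n =>
      (G.backset.filter fun v' => G.IsAncestor v' (f2 j).1).card)
    (xs : Fin n → ℝ) {v : W} (hv : v ∈ G.backset) :
    ∑ l : G.Leaf, (if G.IsAncestor v l.1 then xs (f2.symm l) else 0)
      = ∑ j ∈ Finset.univ.filter (fun j : Fin n => j.1 < G.lcount v), xs j := by
  have h1 : ∑ l : G.Leaf, (if G.IsAncestor v l.1 then xs (f2.symm l) else 0)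
      = ∑ l ∈ Finset.univ.filter (fun l : G.Leaf => G.IsAncestor v l.1), xs (f2.symm l) := by
    rw [Finset.sum_filter]
  set K := Finset.univ.filter (fun j : Fin n => G.IsAncestor v (f2 j).1) with hK
  have h2 : ∑ l ∈ Finset.univ.filter (fun l : G.Leaf => G.IsAncestor v l.1), xs (f2.symm l)
      = ∑ j ∈ K, xs j := by
    rw [hK]
    rw [← sum_filter_equiv f2 (fun l => G.IsAncestor v l.1) (fun l => xs (f2.symm l))]
    apply Finset.sum_congr rfl
    intro j _
    rw [Equiv.symm_apply_apply]
  have hdc : ∀ i j : Fin n, i ≤ j → j ∈ K → i ∈ K := by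
    intro i j hij hjK
    rw [hK, Finset.mem_filter] at hjK ⊢
    refine ⟨Finset.mem_univ _, ?_⟩
    rw [G.caterpillar_upper_set hGc hv] at hjK ⊢
    exact le_trans hjK.2 (hf2 hij)
  have hKcard : K.card = G.lcount v := by
    rw [hK, card_filter_equiv f2 (fun l : G.Leaf => G.IsAncestor v l.1)]
    exact G.card_leafFilter_eq_lcount v
  rw [h1, h2, downclosed_eq_prefix K hdc, hKcard]

end TreeOn

namespace TreeOn
open Finset

lemma card_ds_filter {V : Type} [Fintype V] [DecidableEq V] (T : TreeOn V) {m : ℕ}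
    (eT : Fin m ≃ ↥(Finset.univ.filter fun v : V => ¬T.IsLeaf v)) (c : ℕ) :
    (Finset.univ.filter fun j : Fin m => c ≤ T.childCount (eT j).1).card
      = (Finset.univ.filter fun v : V =>
          T.childCount v ≠ 0 ∧ c ≤ T.childCount v).card := by
  classical
  set P : V → Prop := fun a => ¬T.IsLeaf a ∧ c ≤ T.childCount a with hP
  have h1 : (Finset.univ.filter fun j : Fin m => c ≤ T.childCount (eT j).1)
      = Finset.univ.filter fun j : Fin m => P (eT j).1 := by
    apply Finset.filter_congr
    intro j _
    have h2 := (eT j).2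
    rw [Finset.mem_filter] at h2
    simp only [hP, eq_iff_iff]
    tauto
  rw [h1, card_filter_equiv_subtype eT P
    (fun a ha => Finset.mem_filter.mpr ⟨Finset.mem_univ _, ha.1⟩)]
  congr 1
  apply Finset.filter_congr
  intro v _
  simp only [hP, eq_iff_iff, Ne, T.childCount_eq_zero_iff]

lemma qform_le_greedy {V W : Type} [Fintype V] [DecidableEq V] [Fintype W] [DecidableEq W]
    (T : TreeOn V) (G : TreeOn W) (hG : G.IsGreedyCaterpillar) (hS : T.outdegSeq = G.outdegSeq)
    (hV : 1 < Fintype.card V) (x : T.Leaf → ℝ) (hx : ∀ l, 0 ≤ x l) :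
    ∃ y : G.Leaf → ℝ, (∑ l : G.Leaf, y l ^ 2 = ∑ l : T.Leaf, x l ^ 2)
      ∧ T.qform x ≤ G.qform y := by
  classical
  have hcount : ∀ (p : ℕ → Prop) (hp : DecidablePred p),
      (Finset.univ.filter fun v : V => p (T.childCount v)).card
        = (Finset.univ.filter fun w : W => p (G.childCount w)).card := by
    intro p hp
    rw [T.count_outdeg p, G.count_outdeg p, hS]
  have hITeq : (Finset.univ.filter fun v : V => T.childCount v ≠ 0)
      = Finset.univ.filter fun v : V => ¬T.IsLeaf v := by
    apply Finset.filter_congr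
    intro v _
    simp only [Ne, eq_iff_iff, T.childCount_eq_zero_iff]
  have hIGeq : (Finset.univ.filter fun w : W => G.childCount w ≠ 0)
      = Finset.univ.filter fun w : W => ¬G.IsLeaf w := by
    apply Finset.filter_congr
    intro w _
    simp only [Ne, eq_iff_iff, G.childCount_eq_zero_iff]
  set m := (Finset.univ.filter fun v : V => ¬T.IsLeaf v).card with hm
  have hIGcard : (Finset.univ.filter fun w : W => ¬G.IsLeaf w).card = m := by
    rw [hm, ← hITeq, ← hIGeq]
    exact (hcount (fun d => d ≠ 0) inferInstance).symm
  have hrootT : ¬ T.IsLeaf T.root := T.root_not_isLeaf hV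
  have hm1 : 1 ≤ m := Finset.card_pos.mpr
    ⟨T.root, Finset.mem_filter.mpr ⟨Finset.mem_univ _, hrootT⟩⟩
  have hW : 1 < Fintype.card W := by
    by_contra h
    push_neg at h
    have hall : ∀ w : W, w = G.root := fun w => Fintype.card_le_one_iff.mp h w G.root
    have hleafroot : G.IsLeaf G.root := fun u _ => (hall u).trans (hall G.root).symm
    have hempty : (Finset.univ.filter fun w : W => ¬G.IsLeaf w) = ∅ := by
      apply Finset.filter_eq_empty_iff.mpr
      intro w _
      rw [hall w]
      simpa using hleafroot
    rw [hempty] at hIGcard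
    simp at hIGcard
    omega
  have hrootG : ¬ G.IsLeaf G.root := G.root_not_isLeaf hW
  -- leaf cardinalities
  set n := Fintype.card T.Leaf with hn
  have hleafcard : Fintype.card G.Leaf = n := by
    rw [hn, Fintype.card_subtype, Fintype.card_subtype]
    have h1 : (Finset.univ.filter fun v : V => T.IsLeaf v)
        = Finset.univ.filter fun v : V => T.childCount v = 0 := by
      apply Finset.filter_congr
      intro v _
      simp only [eq_iff_iff, T.childCount_eq_zero_iff]
    have h2 : (Finset.univ.filter fun w : W => G.IsLeaf w)
        = Finset.univ.filter fun w : W => G.childCount w = 0 := by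
      apply Finset.filter_congr
      intro w _
      simp only [eq_iff_iff, G.childCount_eq_zero_iff]
    rw [h1, h2]
    exact (hcount (fun d => d = 0) inferInstance).symm
  -- sorted internal degrees
  obtain ⟨eT, heT⟩ := exists_antitone_equiv
    (fun w : ↥(Finset.univ.filter fun v : V => ¬T.IsLeaf v) => T.childCount w.1)
    (N := m) (by rw [Fintype.card_coe])
  obtain ⟨eG, heG⟩ := exists_antitone_equiv
    (fun w : ↥(Finset.univ.filter fun v : W => ¬G.IsLeaf v) => G.childCount w.1)
    (N := m) (by rw [Fintype.card_coe]; exact hIGcard)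
  have heT' : Antitone fun j : Fin m => T.childCount (eT j).1 := heT
  have heG' : Antitone fun j : Fin m => G.childCount (eG j).1 := heG
  have hds : (fun j : Fin m => T.childCount (eT j).1)
      = fun j : Fin m => G.childCount (eG j).1 := by
    apply antitone_eq_of_counts _ _ heT' heG'
    intro c
    rw [T.card_ds_filter eT c, G.card_ds_filter eG c]
    exact hcount (fun d => d ≠ 0 ∧ c ≤ d) inferInstance
  -- sorted backsets by tcount
  have hPTcard : T.backset.card + 1 = m := T.backset_card hrootT
  have hPGcard : G.backset.card + 1 = m := by
    rw [G.backset_card hrootG]; exact hIGcard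
  set q := T.backset.card with hq
  obtain ⟨eP, heP⟩ := exists_antitone_equiv
    (fun u : ↥T.backset => T.tcount u.1) (N := q) (by rw [Fintype.card_coe])
  obtain ⟨fP, hfP⟩ := exists_antitone_equiv
    (fun v : ↥G.backset => G.tcount v.1) (N := q)
    (by rw [Fintype.card_coe]; omega)
  have heP' : Antitone fun k : Fin q => T.tcount (eP k).1 := heP
  have hfP' : Antitone fun k : Fin q => G.tcount (fP k).1 := hfP
  have hbackT : ∀ k : Fin q, (eP k).1 ∈ T.backset := fun k => (eP k).2
  have hbackG : ∀ k : Fin q, (fP k).1 ∈ G.backset := fun k => (fP k).2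
  have hintT : ∀ k : Fin q, ¬ T.IsLeaf (eP k).1 := by
    intro k
    have h := hbackT k
    simp only [backset, Finset.mem_filter] at h
    exact h.2.1
  have hintG : ∀ k : Fin q, ¬ G.IsLeaf (fP k).1 := by
    intro k
    have h := hbackG k
    simp only [backset, Finset.mem_filter] at h
    exact h.2.1
  -- T side bound on tcount
  have hTt : ∀ k : Fin q, T.tcount (eP k).1 + k.1 + 1 ≤ m := by
    intro k
    set s := T.tcount (eP k).1 with hsdef
    have hs1 : 1 ≤ s := T.one_le_tcount (hintT k)
    have hnem : (T.backset.filter fun u => s ≤ T.tcount u).Nonempty :=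
      ⟨(eP k).1, Finset.mem_filter.mpr ⟨hbackT k, le_rfl⟩⟩
    have hUs := T.us_counting hs1 hnem
    have hk1 : k.1 + 1 ≤ (T.backset.filter fun u => s ≤ T.tcount u).card := by
      have hinj : Set.InjOn (fun j : Fin q => (eP j).1) (Finset.Iic k) := by
        intro a _ b _ hab
        exact eP.injective (Subtype.ext hab)
      have himg : (Finset.Iic k).image (fun j : Fin q => (eP j).1)
          ⊆ T.backset.filter fun u => s ≤ T.tcount u := by
        intro w hw
        rw [Finset.mem_image] at hw
        obtain ⟨j, hj, rfl⟩ := hw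
        rw [Finset.mem_Iic] at hj
        exact Finset.mem_filter.mpr ⟨hbackT j, heP' hj⟩
      calc k.1 + 1 = (Finset.Iic k).card := (Fin.card_Iic k).symm
        _ = ((Finset.Iic k).image (fun j : Fin q => (eP j).1)).card :=
            (Finset.card_image_of_injOn hinj).symm
        _ ≤ _ := Finset.card_le_card himg
    omega
  -- G side bound
  have hGanti : StrictAnti fun k : Fin q => G.tcount (fP k).1 := by
    intro a b hab
    have hle : G.tcount (fP b).1 ≤ G.tcount (fP a).1 := hfP' hab.le
    have hne : (fP a).1 ≠ (fP b).1 := by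
      intro h
      exact absurd (fP.injective (Subtype.ext h)) (Fin.ne_of_lt hab)
    rcases hG.1 (fP a).1 (fP b).1 (hintG a) (hintG b) with h | h
    · exact G.tcount_lt_of_anc h hne (hintG a)
    · have := G.tcount_lt_of_anc h (Ne.symm hne) (hintG b)
      omega
  have hGt : ∀ k : Fin q, m ≤ G.tcount (fP k).1 + k.1 + 1 := by
    intro k
    have := strictAnti_lb _ hGanti (fun j => G.one_le_tcount (hintG j)) k
    omega
  -- sorted leaves
  obtain ⟨f1, hf1⟩ := exists_antitone_equiv x (N := n) (rfl : Fintype.card T.Leaf = n)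
  obtain ⟨f2, hf2⟩ := exists_antitone_equiv
    (fun l : G.Leaf => (G.backset.filter fun v' => G.IsAncestor v' l.1).card)
    (N := n) hleafcard
  have hf1' : Antitone fun j : Fin n => x (f1 j) := hf1
  have hf2' : Antitone fun j : Fin n =>
      (G.backset.filter fun v' => G.IsAncestor v' (f2 j).1).card := hf2
  set xs : Fin n → ℝ := fun j => x (f1 j) with hxs
  set y : G.Leaf → ℝ := fun l => xs (f2.symm l) with hy
  have hxs0 : ∀ j, 0 ≤ xs j := fun j => hx _
  have hsq : ∑ l : G.Leaf, y l ^ 2 = ∑ l : T.Leaf, x l ^ 2 := by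
    calc ∑ l : G.Leaf, y l ^ 2 = ∑ j : Fin n, y (f2 j) ^ 2 :=
        (sum_equiv_all f2 (fun l => y l ^ 2)).symm
      _ = ∑ j : Fin n, xs j ^ 2 := by
          apply Finset.sum_congr rfl
          intro j _
          rw [hy]
          simp
      _ = ∑ l : T.Leaf, x l ^ 2 := sum_equiv_all f1 (fun l => x l ^ 2)
  -- termwise comparison
  have hterm : ∀ k : Fin q,
      (∑ l : T.Leaf, if T.IsAncestor (eP k).1 l.1 then x l else 0)
        ≤ ∑ l : G.Leaf, if G.IsAncestor (fP k).1 l.1 then y l else 0 := by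
    intro k
    set u := (eP k).1 with hu
    set v := (fP k).1 with hv
    have hL : (∑ l : T.Leaf, if T.IsAncestor u l.1 then x l else 0)
        = ∑ j ∈ Finset.univ.filter (fun j : Fin n => T.IsAncestor u (f1 j).1), xs j := by
      rw [← Finset.sum_filter]
      exact (sum_filter_equiv f1 (fun l => T.IsAncestor u l.1) x).symm
    have hK1card : (Finset.univ.filter (fun j : Fin n => T.IsAncestor u (f1 j).1)).card
        = T.lcount u :=
      (card_filter_equiv f1 (fun l : T.Leaf => T.IsAncestor u l.1)).trans
        (T.card_leafFilter_eq_lcount u)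
    have h1 : ∑ j ∈ Finset.univ.filter (fun j : Fin n => T.IsAncestor u (f1 j).1), xs j
        ≤ ∑ j ∈ Finset.univ.filter (fun j : Fin n => j.1 < T.lcount u), xs j := by
      have h := sum_le_prefix_sum xs hf1'
        (Finset.univ.filter (fun j : Fin n => T.IsAncestor u (f1 j).1))
      rw [hK1card] at h
      exact h
    have htle : T.tcount u ≤ G.tcount v := by
      have h1 := hTt k
      have h2 := hGt k
      have h3 : T.tcount u = T.tcount (eP k).1 := by rw [hu]
      have h4 : G.tcount v = G.tcount (fP k).1 := by rw [hv]
      omega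
    have hlc : T.lcount u ≤ G.lcount v := by
      calc T.lcount u
          ≤ 1 + ∑ j ∈ Finset.univ.filter (fun j : Fin m => j.1 < T.tcount u),
              (T.childCount (eT j).1 - 1) := T.lcount_le_F eT heT' u
        _ ≤ 1 + ∑ j ∈ Finset.univ.filter (fun j : Fin m => j.1 < G.tcount v),
              (T.childCount (eT j).1 - 1) := by
            apply Nat.add_le_add_left
            apply Finset.sum_le_sum_of_subset
            intro j hj
            rw [Finset.mem_filter] at hj ⊢
            exact ⟨hj.1, by omega⟩
        _ = 1 + ∑ j ∈ Finset.univ.filter (fun j : Fin m => j.1 < G.tcount v),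
              (G.childCount (eG j).1 - 1) := by
            congr 1
            apply Finset.sum_congr rfl
            intro j _
            rw [congrFun hds j]
        _ ≤ G.lcount v := G.F_le_lcount hG eG heG' (hintG k)
    have h2 : ∑ j ∈ Finset.univ.filter (fun j : Fin n => j.1 < T.lcount u), xs j
        ≤ ∑ j ∈ Finset.univ.filter (fun j : Fin n => j.1 < G.lcount v), xs j := by
      apply Finset.sum_le_sum_of_subset_of_nonneg
      · intro j hj
        rw [Finset.mem_filter] at hj ⊢
        exact ⟨hj.1, by omega⟩
      · intro j _ _
        exact hxs0 j
    have hR : ∑ l : G.Leaf, (if G.IsAncestor v l.1 then y l else 0)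
        = ∑ j ∈ Finset.univ.filter (fun j : Fin n => j.1 < G.lcount v), xs j :=
      G.gsum_prefix hG.1 f2 hf2' xs (hbackG k)
    rw [hL, hR]
    exact le_trans h1 h2
  -- assemble
  refine ⟨y, hsq, ?_⟩
  rw [T.qform_split hrootT x, G.qform_split hrootG y]
  apply add_le_add
  · exact le_of_eq hsq.symm
  · have hTq : ∑ u ∈ T.backset,
        (∑ l : T.Leaf, if T.IsAncestor u l.1 then x l else 0) ^ 2
        = ∑ k : Fin q,
          (∑ l : T.Leaf, if T.IsAncestor (eP k).1 l.1 then x l else 0) ^ 2 := by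
      rw [← Finset.sum_coe_sort T.backset
        (fun u => (∑ l : T.Leaf, if T.IsAncestor u l.1 then x l else 0) ^ 2)]
      exact (sum_equiv_all eP (fun u : ↥T.backset =>
        (∑ l : T.Leaf, if T.IsAncestor u.1 l.1 then x l else 0) ^ 2)).symm
    have hGq : ∑ v ∈ G.backset,
        (∑ l : G.Leaf, if G.IsAncestor v l.1 then y l else 0) ^ 2
        = ∑ k : Fin q,
          (∑ l : G.Leaf, if G.IsAncestor (fP k).1 l.1 then y l else 0) ^ 2 := by
      rw [← Finset.sum_coe_sort G.backset
        (fun v => (∑ l : G.Leaf, if G.IsAncestor v l.1 then y l else 0) ^ 2)]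
      exact (sum_equiv_all fP (fun v : ↥G.backset =>
        (∑ l : G.Leaf, if G.IsAncestor v.1 l.1 then y l else 0) ^ 2)).symm
    rw [hTq, hGq]
    apply Finset.sum_le_sum
    intro k _
    have hnn : 0 ≤ ∑ l : T.Leaf, (if T.IsAncestor (eP k).1 l.1 then x l else 0) := by
      apply Finset.sum_nonneg
      intro l _
      split
      · exact hx l
      · exact le_rfl
    exact pow_le_pow_left₀ hnn (hterm k) 2

end TreeOn

/-- Among all rooted trees with a given outdegree sequence,
the greedy caterpillar has the maximum ancestral spectral radius. -/
theorem rhoC_le_rhoC_greedyCaterpillar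
    {V W : Type} [Fintype V] [DecidableEq V] [Fintype W] [DecidableEq W]
    (T : TreeOn V) (G : TreeOn W)
    (hG : G.IsGreedyCaterpillar) (hS : T.outdegSeq = G.outdegSeq) :
    T.rhoC ≤ G.rhoC := by
  classical
  obtain ⟨lG, hlG, -⟩ := G.exists_leaf_anc G.root
  have hneG : Nonempty G.Leaf := ⟨⟨lG, hlG⟩⟩
  have hrhoG : G.rhoC
      = sSup {μ : ℝ | ∃ x : G.Leaf → ℝ, x ≠ 0 ∧ G.ancMatrix.mulVec x = μ • x} := rfl
  have hray : ∀ y : G.Leaf → ℝ, y ⬝ᵥ (G.ancMatrix *ᵥ y) ≤ G.rhoC * (y ⬝ᵥ y) := by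
    intro y
    rw [hrhoG]
    exact rayleigh_le_sSup G.ancMatrix G.ancMatrix_isHermitian y
  have hq0 : ∀ y : G.Leaf → ℝ, 0 ≤ G.qform y := fun y =>
    Finset.sum_nonneg (fun u _ => sq_nonneg _)
  have hrho0 : 0 ≤ G.rhoC := by
    have h := hray (fun _ => 1)
    rw [G.dot_ancMatrix] at h
    have hq := hq0 (fun _ => 1)
    have hdot : (fun _ : G.Leaf => (1:ℝ)) ⬝ᵥ (fun _ => 1) = (Fintype.card G.Leaf : ℝ) := by
      simp [dotProduct]
    rw [hdot] at h
    have hcard : (0:ℝ) < Fintype.card G.Leaf := by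
      have := Fintype.card_pos (α := G.Leaf)
      exact_mod_cast this
    nlinarith
  have hrhoT : T.rhoC
      = sSup {μ : ℝ | ∃ x : T.Leaf → ℝ, x ≠ 0 ∧ T.ancMatrix.mulVec x = μ • x} := rfl
  rw [hrhoT]
  apply Real.sSup_le _ hrho0
  rintro μ ⟨x, hx, hAx⟩
  have hxx : 0 < x ⬝ᵥ x := by
    rw [dotProduct]
    obtain ⟨l, hl⟩ := Function.ne_iff.mp hx
    apply Finset.sum_pos' (fun i _ => mul_self_nonneg (x i))
    exact ⟨l, Finset.mem_univ l, mul_self_pos.mpr hl⟩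
  have hmu : μ * (x ⬝ᵥ x) = T.qform x := by
    rw [← T.dot_ancMatrix]
    show μ * (x ⬝ᵥ x) = x ⬝ᵥ (T.ancMatrix.mulVec x)
    rw [hAx]
    simp [dotProduct, Finset.mul_sum]
    apply Finset.sum_congr rfl
    intro l _
    ring
  set x' : T.Leaf → ℝ := fun l => |x l| with hx'
  have hq_abs : T.qform x ≤ T.qform x' := by
    apply Finset.sum_le_sum
    intro u _
    have habs : |∑ l : T.Leaf, if T.IsAncestor u l.1 then x l else 0|
        ≤ ∑ l : T.Leaf, if T.IsAncestor u l.1 then x' l else 0 := by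
      refine le_trans (Finset.abs_sum_le_sum_abs _ _) ?_
      apply le_of_eq
      apply Finset.sum_congr rfl
      intro l _
      rw [hx']
      split <;> simp
    calc (∑ l : T.Leaf, if T.IsAncestor u l.1 then x l else 0) ^ 2
        = |∑ l : T.Leaf, if T.IsAncestor u l.1 then x l else 0| ^ 2 := (sq_abs _).symm
      _ ≤ (∑ l : T.Leaf, if T.IsAncestor u l.1 then x' l else 0) ^ 2 :=
          pow_le_pow_left₀ (abs_nonneg _) habs 2
  have hx'sq : ∑ l : T.Leaf, x' l ^ 2 = x ⬝ᵥ x := by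
    rw [dotProduct]
    apply Finset.sum_congr rfl
    intro l _
    rw [hx']
    simp [sq_abs, sq]
  by_cases hV : 1 < Fintype.card V
  · obtain ⟨y, hy1, hy2⟩ := TreeOn.qform_le_greedy T G hG hS hV x' (fun l => abs_nonneg _)
    have hyy : y ⬝ᵥ y = x ⬝ᵥ x := by
      rw [dotProduct, ← hx'sq, ← hy1]
      apply Finset.sum_congr rfl
      intro l _
      ring
    have hchain : μ * (x ⬝ᵥ x) ≤ G.rhoC * (x ⬝ᵥ x) := by
      calc μ * (x ⬝ᵥ x) = T.qform x := hmu
        _ ≤ T.qform x' := hq_abs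
        _ ≤ G.qform y := hy2
        _ = y ⬝ᵥ (G.ancMatrix *ᵥ y) := (G.dot_ancMatrix y).symm
        _ ≤ G.rhoC * (y ⬝ᵥ y) := hray y
        _ = G.rhoC * (x ⬝ᵥ x) := by rw [hyy]
    exact le_of_mul_le_mul_right hchain hxx
  · push_neg at hV
    have hall : ∀ v : V, v = T.root := fun v => Fintype.card_le_one_iff.mp hV v T.root
    have hempty : Finset.univ.erase T.root = (∅ : Finset V) := by
      ext v
      simp only [Finset.mem_erase, Finset.mem_univ, and_true, Finset.notMem_empty,
        iff_false]
      intro h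
      exact (h (hall v)).elim
    have hqz : T.qform x = 0 := by
      rw [TreeOn.qform, hempty, Finset.sum_empty]
    have hz : μ * (x ⬝ᵥ x) = 0 := hmu.trans hqz
    have hmu0 : μ = 0 := by
      rcases mul_eq_zero.mp hz with h | h
      · exact h
      · exact absurd h (ne_of_gt hxx)
    rw [hmu0]
    exact hrho0
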